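/- The BTV(1,1) prior is a proper probability density: if ω(x) > 0 for all x > 0, then ∫_ℝ π(λ) dλ = 1, where π(λ) = 2 ∫_0^∞ ω(x) f(x) g(λ ω(x)) dx. -/
import Mathlib


open MeasureTheory Real

/-- the BTV(1,1) prior is a proper probability density:
if ω(x) > 0 for x > 0 then ∫_ℝ π(λ) dλ = 1, where
π(λ) = 2 ∫_0^∞ ω(x) f(x) g(λ ω(x)) dx. -/
theorem BTV_one_one_proper
    (f g ω : ℝ → ℝ)
    (hf_meas : Measurable f) (hf_nonneg : ∀ x, 0 ≤ f x)
    (hf_int : Integrable f) (hf_one : ∫ x, f x = 1)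
    (hf_even : ∀ x, f (-x) = f x)
    (hg_meas : Measurable g) (hg_nonneg : ∀ t, 0 ≤ g t)
    (hg_int : Integrable g) (hg_one : ∫ t, g t = 1)
    (hg_even : ∀ t, g (-t) = g t)
    (hg_bdd : ∃ C : ℝ, ∀ t, g t ≤ C)
    (hω_meas : Measurable ω)
    (hω_odd : ∀ x, ω (-x) = -ω x)
    (hω_pos : ∀ x, 0 < x → 0 < ω x)
    (hωf_int : IntegrableOn (fun x => ω x * f x) (Set.Ioi 0)) :
    ∫ l : ℝ, 2 * ∫ x in Set.Ioi (0 : ℝ), ω x * f x * g (l * ω x) = 1 := by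
  set ν : Measure ℝ := volume.restrict (Set.Ioi 0) with hν
  -- ∫_{Ioi 0} f = 1/2
  have half : ∫ x in Set.Ioi (0:ℝ), f x = 1/2 := by
    have h1 : ∫ x in Set.Iic (0:ℝ), f x = ∫ x in Set.Ioi (0:ℝ), f x := by
      have := integral_comp_neg_Iic (0:ℝ) f
      simp only [hf_even, neg_zero] at this
      exact this
    have h2 := intervalIntegral.integral_Iic_add_Ioi (b := (0:ℝ)) hf_int.integrableOn hf_int.integrableOn
    rw [hf_one, h1] at h2
    linarith
  -- scaling of g
  have hscale : ∀ x : ℝ, 0 < x → (∫ l : ℝ, g (l * ω x)) = (ω x)⁻¹ := by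
    intro x hx
    have := MeasureTheory.Measure.integral_comp_mul_right g (ω x)
    rw [this, hg_one, smul_eq_mul, mul_one, abs_of_nonneg (inv_nonneg.mpr (hω_pos x hx).le)]
  -- pointwise computation of the integral in l
  have hinner : ∀ x : ℝ, 0 < x → (∫ l : ℝ, ω x * f x * g (l * ω x)) = f x := by
    intro x hx
    rw [integral_const_mul, hscale x hx]
    have : ω x ≠ 0 := (hω_pos x hx).ne'
    field_simp
  -- nonnegativity of the integrand for x > 0
  have hF_nonneg : ∀ x : ℝ, 0 < x → ∀ l : ℝ, 0 ≤ ω x * f x * g (l * ω x) := fun x hx l =>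
    mul_nonneg (mul_nonneg (hω_pos x hx).le (hf_nonneg x)) (hg_nonneg _)
  -- measurability on the product
  have hmeas : AEStronglyMeasurable (Function.uncurry fun l x : ℝ => ω x * f x * g (l * ω x))
      ((volume : Measure ℝ).prod ν) := by
    apply Measurable.aestronglyMeasurable
    exact ((hω_meas.comp measurable_snd).mul (hf_meas.comp measurable_snd)).mul
      (hg_meas.comp (measurable_fst.mul (hω_meas.comp measurable_snd)))
  -- integrability of the x-slices in l
  have hslice : ∀ x : ℝ, 0 < x → Integrable (fun l => ω x * f x * g (l * ω x)) := by
    intro x hx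
    exact (hg_int.comp_mul_right' (hω_pos x hx).ne').const_mul _
  -- integrability on the product measure
  have hprod : Integrable (Function.uncurry fun l x : ℝ => ω x * f x * g (l * ω x))
      ((volume : Measure ℝ).prod ν) := by
    rw [integrable_prod_iff' hmeas]
    constructor
    · rw [hν, ae_restrict_iff' measurableSet_Ioi]
      exact Filter.Eventually.of_forall fun x hx => hslice x hx
    · have heq : (fun x : ℝ => f x) =ᵐ[ν]
          fun x => ∫ l : ℝ, ‖Function.uncurry (fun l x : ℝ => ω x * f x * g (l * ω x)) (l, x)‖ := by
        rw [hν]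
        filter_upwards [ae_restrict_mem measurableSet_Ioi] with x hx
        have : (fun l : ℝ => ‖Function.uncurry (fun l x : ℝ => ω x * f x * g (l * ω x)) (l, x)‖)
            = fun l : ℝ => ω x * f x * g (l * ω x) := by
          funext l
          simp only [Function.uncurry]
          exact abs_of_nonneg (hF_nonneg x hx l)
        rw [this, hinner x hx]
      exact (hf_int.integrableOn).congr heq
  -- swap the integrals
  have hswap := integral_integral_swap (μ := (volume : Measure ℝ)) (ν := ν)
    (f := fun l x : ℝ => ω x * f x * g (l * ω x)) hprod
  have hx_int : (∫ x, ∫ l : ℝ, ω x * f x * g (l * ω x) ∂(volume : Measure ℝ) ∂ν)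
      = ∫ x in Set.Ioi (0:ℝ), f x := by
    rw [hν]
    refine integral_congr_ae ?_
    filter_upwards [ae_restrict_mem measurableSet_Ioi] with x hx
    exact hinner x hx
  calc ∫ l : ℝ, 2 * ∫ x in Set.Ioi (0 : ℝ), ω x * f x * g (l * ω x)
      = 2 * ∫ l : ℝ, ∫ x in Set.Ioi (0 : ℝ), ω x * f x * g (l * ω x) := integral_const_mul 2 _
    _ = 2 * ∫ x in Set.Ioi (0:ℝ), f x := by rw [← hν, hswap, hx_int]
    _ = 1 := by rw [half]; norm_num
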